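/- Let d, d_ν ≥ 1, let f : ℝ^{d_ν} → ℝ^d be Δ-Lipschitz (Euclidean norms), let w ∈ [0,1), c > 0, y ∈ ℝ^d, and for ν ∈ ℝ^{d_ν} let μ_ν = N(w·y + (1-w)·f(ν), cI_d). Fix ν, ν' ∈ ℝ^{d_ν} and an integer P ≥ 0, and define the P+2 equally spaced points ν*_j = ν + (j/(P+1))(ν' - ν) for j = 0, 1, …, P+1 on the segment from ν to ν'. Then for every j ∈ {1, …, P+1}, χ²(μ_{ν*_j} ‖ μ_{ν*_{j-1}}) + 1 ≤ exp(c^{-1}(1-w)²Δ²‖ν - ν'‖²/(P+1)²). In particular, linear tempering with P intermediate points reduces the exponent in the χ²-divergence bound between consecutive conditional posteriors by the factor (P+1)². -/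

import Mathlib

open MeasureTheory Real

/-- Density of the isotropic Gaussian measure `N(m, c I_d)` on `ℝ^d`
with respect to Lebesgue measure. -/
noncomputable def gaussDensity (d : ℕ) (c : ℝ) (m θ : EuclideanSpace ℝ (Fin d)) : ℝ :=
  (2 * π * c) ^ (-(d : ℝ) / 2) * Real.exp (-‖θ - m‖ ^ 2 / (2 * c))

/-- χ²-divergence between isotropic Gaussians `N(m₂, c I_d)` and `N(m₁, c I_d)`,
defined as `∫ (q₂/q₁ - 1)² q₁`. -/
noncomputable def gaussChiSq (d : ℕ) (c : ℝ) (m₂ m₁ : EuclideanSpace ℝ (Fin d)) : ℝ :=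
  ∫ θ, (gaussDensity d c m₂ θ / gaussDensity d c m₁ θ - 1) ^ 2 * gaussDensity d c m₁ θ

lemma integrable_rexp_aux (d : ℕ) {b : ℝ} (hb : 0 < b) :
    Integrable (fun v : EuclideanSpace ℝ (Fin d) => rexp (-b * ‖v‖ ^ 2)) := by
  have h := (GaussianFourier.integrable_cexp_neg_mul_sq_norm_add
    (V := EuclideanSpace ℝ (Fin d)) (b := (b : ℂ)) (by simpa using hb) 0 0).norm
  simpa [Complex.norm_exp, ← Complex.ofReal_pow] using h

lemma integrable_gaussDensity (d : ℕ) {c : ℝ} (hc : 0 < c) (m : EuclideanSpace ℝ (Fin d)) :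
    Integrable (gaussDensity d c m) := by
  have h := ((integrable_rexp_aux d (b := (2*c)⁻¹) (by positivity)).comp_sub_right m).const_mul
    ((2 * π * c) ^ (-(d : ℝ) / 2))
  refine h.congr (Filter.Eventually.of_forall fun θ => ?_)
  unfold gaussDensity
  dsimp only
  rw [show -‖θ - m‖ ^ 2 / (2 * c) = -(2*c)⁻¹ * ‖θ - m‖ ^ 2 by ring]

lemma integral_gaussDensity (d : ℕ) {c : ℝ} (hc : 0 < c) (m : EuclideanSpace ℝ (Fin d)) :
    ∫ θ, gaussDensity d c m θ = 1 := by
  unfold gaussDensity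
  rw [MeasureTheory.integral_const_mul]
  have ht : ∫ θ : EuclideanSpace ℝ (Fin d), rexp (-‖θ - m‖ ^ 2 / (2 * c))
      = ∫ θ : EuclideanSpace ℝ (Fin d), rexp (-(2*c)⁻¹ * ‖θ‖ ^ 2) := by
    rw [← integral_sub_right_eq_self (fun θ : EuclideanSpace ℝ (Fin d) => rexp (-(2*c)⁻¹ * ‖θ‖^2)) m]
    congr 1 with θ
    rw [show -‖θ - m‖ ^ 2 / (2 * c) = -(2*c)⁻¹ * ‖θ - m‖ ^ 2 by ring]
  rw [ht, GaussianFourier.integral_rexp_neg_mul_sq_norm (by positivity)]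
  rw [finrank_euclideanSpace_fin]
  have : (π / (2*c)⁻¹) = 2 * π * c := by field_simp
  rw [this, ← Real.rpow_add (by positivity)]
  rw [neg_div, neg_add_cancel, Real.rpow_zero]

lemma gauss_ratio (d : ℕ) {c : ℝ} (hc : 0 < c) (m₂ m₁ θ : EuclideanSpace ℝ (Fin d)) :
    (gaussDensity d c m₂ θ / gaussDensity d c m₁ θ - 1) ^ 2 * gaussDensity d c m₁ θ
      = Real.exp (‖m₂ - m₁‖ ^ 2 / c) * gaussDensity d c (m₂ + (m₂ - m₁)) θ
        - 2 * gaussDensity d c m₂ θ + gaussDensity d c m₁ θ := by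
  have key : ‖θ - m₁‖ ^ 2 - 2 * ‖θ - m₂‖ ^ 2
      = 2 * ‖m₂ - m₁‖ ^ 2 - ‖θ - (m₂ + (m₂ - m₁))‖ ^ 2 := by
    have h1 : θ - m₁ = (θ - m₂) + (m₂ - m₁) := by abel
    have h2 : θ - (m₂ + (m₂ - m₁)) = (θ - m₂) - (m₂ - m₁) := by abel
    rw [h1, h2]
    have := norm_add_sq_real (θ - m₂) (m₂ - m₁)
    have := norm_sub_sq_real (θ - m₂) (m₂ - m₁)
    linarith
  have hrel : Real.exp (‖m₂ - m₁‖ ^ 2 / c) * Real.exp (-‖θ - (m₂ + (m₂ - m₁))‖ ^ 2 / (2 * c))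
      * Real.exp (-‖θ - m₁‖ ^ 2 / (2 * c)) = Real.exp (-‖θ - m₂‖ ^ 2 / (2 * c)) ^ 2 := by
    rw [← Real.exp_add, ← Real.exp_add, ← Real.exp_nat_mul]
    congr 1
    field_simp
    linear_combination (-1) * key
  have hC : (0:ℝ) < (2 * π * c) ^ (-(d : ℝ) / 2) :=
    Real.rpow_pos_of_pos (by positivity) _
  have hAG : gaussDensity d c m₂ θ ^ 2
      = Real.exp (‖m₂ - m₁‖ ^ 2 / c) * gaussDensity d c (m₂ + (m₂ - m₁)) θ
        * gaussDensity d c m₁ θ := by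
    unfold gaussDensity
    linear_combination (-(((2 * π * c) ^ (-(d : ℝ) / 2)) ^ 2)) * hrel
  have hB : gaussDensity d c m₁ θ ≠ 0 := by
    unfold gaussDensity; positivity
  field_simp
  linear_combination hAG

lemma gaussChiSq_add_one (d : ℕ) {c : ℝ} (hc : 0 < c) (m₂ m₁ : EuclideanSpace ℝ (Fin d)) :
    gaussChiSq d c m₂ m₁ + 1 = Real.exp (‖m₂ - m₁‖ ^ 2 / c) := by
  unfold gaussChiSq
  have h3 := integrable_gaussDensity d hc (m₂ + (m₂ - m₁))
  have h2 := integrable_gaussDensity d hc m₂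
  have h1 := integrable_gaussDensity d hc m₁
  have : (∫ θ, (gaussDensity d c m₂ θ / gaussDensity d c m₁ θ - 1) ^ 2 * gaussDensity d c m₁ θ)
      = ∫ θ, (Real.exp (‖m₂ - m₁‖ ^ 2 / c) * gaussDensity d c (m₂ + (m₂ - m₁)) θ
        - 2 * gaussDensity d c m₂ θ + gaussDensity d c m₁ θ) := by
    congr 1 with θ
    exact gauss_ratio d hc m₂ m₁ θ
  have hI : Integrable (fun θ => Real.exp (‖m₂ - m₁‖ ^ 2 / c)
      * gaussDensity d c (m₂ + (m₂ - m₁)) θ - 2 * gaussDensity d c m₂ θ) :=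
    (h3.const_mul (Real.exp (‖m₂ - m₁‖ ^ 2 / c))).sub (h2.const_mul 2)
  rw [this, integral_add hI h1,
    integral_sub (h3.const_mul (Real.exp (‖m₂ - m₁‖ ^ 2 / c))) (h2.const_mul 2),
    integral_const_mul, integral_const_mul,
    integral_gaussDensity d hc, integral_gaussDensity d hc, integral_gaussDensity d hc]
  ring

/-- Linear tempering: augmenting the segment from `ν` to `ν'` with `P`
equally spaced intermediate points `ν*_j = ν + (j/(P+1))(ν' - ν)`, the χ²-divergence between
consecutive conditional posteriors `μ_{ν*_j} = N(w y + (1-w) f(ν*_j), c I_d)` satisfies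
`χ²(μ_{ν*_j} ‖ μ_{ν*_{j-1}}) + 1 ≤ exp(c⁻¹ (1-w)² Δ² ‖ν - ν'‖² / (P+1)²)`. -/
theorem gauss_chiSq_tempered_le (d dν : ℕ) (hd : 1 ≤ d) (hdν : 1 ≤ dν)
    (f : EuclideanSpace ℝ (Fin dν) → EuclideanSpace ℝ (Fin d)) (Δ : ℝ)
    (hf : ∀ ν ν', ‖f ν - f ν'‖ ≤ Δ * ‖ν - ν'‖)
    (w : ℝ) (hw0 : 0 ≤ w) (hw1 : w < 1) (c : ℝ) (hc : 0 < c)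
    (y : EuclideanSpace ℝ (Fin d))
    (ν ν' : EuclideanSpace ℝ (Fin dν)) (P : ℕ)
    (νstar : ℕ → EuclideanSpace ℝ (Fin dν))
    (hνstar : ∀ j, j ≤ P + 1 →
      νstar j = ν + ((j : ℝ) / ((P : ℝ) + 1)) • (ν' - ν)) :
    ∀ j, 1 ≤ j → j ≤ P + 1 →
      gaussChiSq d c (w • y + (1 - w) • f (νstar j)) (w • y + (1 - w) • f (νstar (j - 1))) + 1
        ≤ Real.exp (c⁻¹ * (1 - w) ^ 2 * Δ ^ 2 * ‖ν - ν'‖ ^ 2 / ((P : ℝ) + 1) ^ 2) := by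
  intro j hj1 hj2
  rw [gaussChiSq_add_one d hc]
  apply Real.exp_le_exp.mpr
  have h1w : (0:ℝ) ≤ 1 - w := by linarith
  have hP : (0:ℝ) < (P:ℝ) + 1 := by positivity
  -- Δ is nonnegative
  have hΔ : 0 ≤ Δ := by
    have he : ‖(EuclideanSpace.single (⟨0, hdν⟩ : Fin dν) (1:ℝ)) - 0‖ = 1 := by
      simp [EuclideanSpace.norm_single]
    have h := hf (EuclideanSpace.single (⟨0, hdν⟩ : Fin dν) (1:ℝ)) 0
    rw [he, mul_one] at h
    exact le_trans (norm_nonneg _) h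
  -- the difference of means
  have hdiff : (w • y + (1 - w) • f (νstar j)) - (w • y + (1 - w) • f (νstar (j - 1)))
      = (1 - w) • (f (νstar j) - f (νstar (j - 1))) := by
    rw [smul_sub]; abel
  have hstep : νstar j - νstar (j - 1) = (((P:ℝ) + 1)⁻¹) • (ν' - ν) := by
    rw [hνstar j hj2, hνstar (j-1) (by omega)]
    have hcast : ((j - 1 : ℕ) : ℝ) = (j : ℝ) - 1 := by
      push_cast [Nat.cast_sub hj1]; ring
    rw [hcast]
    have hsc : (j:ℝ) / ((P:ℝ) + 1) - ((j:ℝ) - 1) / ((P:ℝ) + 1) = ((P:ℝ) + 1)⁻¹ := by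
      field_simp
      ring
    rw [← hsc, sub_smul]
    abel
  have hfb : ‖f (νstar j) - f (νstar (j - 1))‖ ≤ Δ * ‖ν - ν'‖ / ((P:ℝ) + 1) := by
    have h := hf (νstar j) (νstar (j - 1))
    rw [hstep, norm_smul, Real.norm_eq_abs, abs_of_nonneg (le_of_lt (inv_pos.mpr hP))] at h
    calc ‖f (νstar j) - f (νstar (j - 1))‖ ≤ Δ * (((P:ℝ) + 1)⁻¹ * ‖ν' - ν‖) := h
      _ = Δ * ‖ν - ν'‖ / ((P:ℝ) + 1) := by rw [norm_sub_rev]; ring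
  rw [hdiff, norm_smul, Real.norm_eq_abs, abs_of_nonneg h1w]
  have hsq : ‖f (νstar j) - f (νstar (j - 1))‖ ^ 2 ≤ (Δ * ‖ν - ν'‖ / ((P:ℝ) + 1)) ^ 2 :=
    pow_le_pow_left₀ (norm_nonneg _) hfb 2
  have hrhs : c⁻¹ * (1 - w) ^ 2 * Δ ^ 2 * ‖ν - ν'‖ ^ 2 / ((P : ℝ) + 1) ^ 2
      = ((1 - w) ^ 2 * (Δ * ‖ν - ν'‖ / ((P:ℝ) + 1)) ^ 2) / c := by
    field_simp
  rw [mul_pow, hrhs]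
  gcongr
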